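/- Let H ⪰ 0 symmetric with ‖H‖ ≤ λ_max, μ ∈ (0, μ̄], τ ∈ (0,1), and suppose (H + μI)p = g + r with ‖r‖ ≤ τμ‖p‖ and, from an error bound, c₁‖g‖ ≥ c̃‖p‖ for constants c₁, c̃ > 0 with c₁τμ ≤ c̃. Then ‖(H + μI)p‖ ≥ (c̃/(2c₁))‖p‖, and consequently pᵀ(H + μI)p ≥ (λ_max + μ̄)⁻¹ (c̃²/(4c₁²)) ‖p‖². -/

import Mathlib

open RealInnerProductSpace

/-- Cauchy–Schwarz for a PSD symmetric bilinear form `B u w = ⟪A u, w⟫`. -/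
lemma cs_psd_aux {n : ℕ} (A : EuclideanSpace ℝ (Fin n) →L[ℝ] EuclideanSpace ℝ (Fin n))
    (hsymA : ∀ u w, ⟪A u, w⟫ = ⟪u, A w⟫) (hposA : ∀ x, 0 ≤ ⟪A x, x⟫)
    (u w : EuclideanSpace ℝ (Fin n)) :
    ⟪A u, w⟫ ^ 2 ≤ ⟪A u, u⟫ * ⟪A w, w⟫ := by
  have key : ∀ t : ℝ, 0 ≤ ⟪A w, w⟫ * (t * t) + (2 * ⟪A u, w⟫) * t + ⟪A u, u⟫ := by
    intro t
    have h := hposA (u + t • w)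
    have hwu : ⟪A w, u⟫ = ⟪A u, w⟫ := by rw [hsymA, real_inner_comm]
    have expand : ⟪A (u + t • w), u + t • w⟫
        = ⟪A w, w⟫ * (t * t) + (2 * ⟪A u, w⟫) * t + ⟪A u, u⟫ := by
      rw [map_add, map_smul, inner_add_left, inner_add_right, inner_add_right,
        real_inner_smul_left, real_inner_smul_left, real_inner_smul_right,
        real_inner_smul_right, hwu]
      ring
    linarith [expand ▸ h]
  have hd := discrim_le_zero key
  rw [discrim] at hd
  obtain ⟨a, ha⟩ : ∃ a, ⟪A w, w⟫ = a := ⟨_, rfl⟩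
  obtain ⟨b, hb⟩ : ∃ b, ⟪A u, w⟫ = b := ⟨_, rfl⟩
  obtain ⟨c, hc⟩ : ∃ c, ⟪A u, u⟫ = c := ⟨_, rfl⟩
  rw [ha, hb, hc] at hd ⊢
  nlinarith [hd]

set_option maxHeartbeats 1000000 in
/-- curvature lower bound for the safeguarded step: under
(H + μI)p = g + r, ‖r‖ ≤ τμ‖p‖, the error bound c₁‖g‖ ≥ c̃‖p‖ and c₁τμ ≤ c̃,
we get ‖(H + μI)p‖ ≥ (c̃/(2c₁))‖p‖ and
pᵀ(H + μI)p ≥ (λmax + μ̄)⁻¹(c̃²/(4c₁²))‖p‖². -/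
theorem stmt_17 {n : ℕ}
    (H : EuclideanSpace ℝ (Fin n) →L[ℝ] EuclideanSpace ℝ (Fin n))
    (hsym : IsSelfAdjoint H) (hpsd : ∀ x, 0 ≤ ⟪H x, x⟫)
    (lmax μ μbar τ c₁ ctil : ℝ)
    (hH : ‖H‖ ≤ lmax) (hμ : 0 < μ) (hμbar : μ ≤ μbar)
    (hτ : τ ∈ Set.Ioo (0 : ℝ) 1) (hc₁ : 0 < c₁) (hctil : 0 < ctil)
    (g r p : EuclideanSpace ℝ (Fin n))
    (heq : H p + μ • p = g + r) (hr : ‖r‖ ≤ τ * μ * ‖p‖)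
    (heb : ctil * ‖p‖ ≤ c₁ * ‖g‖) (hsmall : c₁ * τ * μ ≤ ctil) :
    ctil / (2 * c₁) * ‖p‖ ≤ ‖H p + μ • p‖ ∧
    (lmax + μbar)⁻¹ * (ctil ^ 2 / (4 * c₁ ^ 2)) * ‖p‖ ^ 2
      ≤ ⟪p, H p + μ • p⟫ := by
  obtain ⟨hτ0, hτ1⟩ := hτ
  set A : EuclideanSpace ℝ (Fin n) →L[ℝ] EuclideanSpace ℝ (Fin n) :=
    H + μ • (1 : EuclideanSpace ℝ (Fin n) →L[ℝ] EuclideanSpace ℝ (Fin n)) with hA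
  have hAapp : ∀ x, A x = H x + μ • x := fun x => by
    simp [hA, ContinuousLinearMap.add_apply, ContinuousLinearMap.smul_apply]
  have hsymm : ∀ u w : EuclideanSpace ℝ (Fin n), ⟪A u, w⟫ = ⟪u, A w⟫ := by
    intro u w
    have hs : ⟪H u, w⟫ = ⟪u, H w⟫ := hsym.isSymmetric u w
    rw [hAapp, hAapp, inner_add_left, inner_add_right, real_inner_smul_left,
      real_inner_smul_right, hs]
  have hposA : ∀ x, 0 ≤ ⟪A x, x⟫ := by
    intro x
    rw [hAapp, inner_add_left, real_inner_smul_left, real_inner_self_eq_norm_sq]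
    have := hpsd x
    nlinarith [norm_nonneg x]
  have hlmax0 : (0 : ℝ) ≤ lmax := le_trans (norm_nonneg H) hH
  have hM : 0 < lmax + μbar := by linarith
  have hAle : ∀ x, ‖A x‖ ≤ (lmax + μbar) * ‖x‖ := by
    intro x
    rw [hAapp]
    calc ‖H x + μ • x‖ ≤ ‖H x‖ + ‖μ • x‖ := norm_add_le _ _
      _ ≤ ‖H‖ * ‖x‖ + |μ| * ‖x‖ := by
          rw [norm_smul, Real.norm_eq_abs]
          exact add_le_add_left (H.le_opNorm x) _
      _ ≤ (lmax + μbar) * ‖x‖ := by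
          rw [abs_of_pos hμ]
          nlinarith [norm_nonneg x]
  have hpv : μ * ‖p‖ ^ 2 ≤ ⟪p, H p + μ • p⟫ := by
    have h1 : ⟪p, H p + μ • p⟫ = ⟪p, H p⟫ + μ * ‖p‖ ^ 2 := by
      rw [inner_add_right, real_inner_smul_right, real_inner_self_eq_norm_sq]
    have h2 : 0 ≤ ⟪p, H p⟫ := by rw [real_inner_comm]; exact hpsd p
    linarith
  have first : ctil / (2 * c₁) * ‖p‖ ≤ ‖H p + μ • p‖ := by
    rcases le_or_gt ‖r‖ (ctil / (2 * c₁) * ‖p‖) with hcase | hcase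
    · have hnorm : ‖g‖ - ‖r‖ ≤ ‖g + r‖ := by
        have h := norm_add_le (g + r) (-r)
        simp only [add_neg_cancel_right, norm_neg] at h
        linarith
      rw [heq]
      have hg : ctil / c₁ * ‖p‖ ≤ ‖g‖ := by
        rw [div_mul_eq_mul_div, div_le_iff₀ hc₁]
        linarith [heb]
      have key : ctil / c₁ * ‖p‖ - ctil / (2 * c₁) * ‖p‖ = ctil / (2 * c₁) * ‖p‖ := by
        field_simp
        ring
      linarith
    · rcases eq_or_lt_of_le (norm_nonneg p) with hp0 | hp0
      · rw [← hp0]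
        simpa using norm_nonneg (H p + μ • p)
      · have hμbig : ctil / (2 * c₁) < μ := by
          have h1 : ctil / (2 * c₁) < τ * μ := by
            have h := lt_of_lt_of_le hcase hr
            nlinarith [h, hp0]
          nlinarith
        have hCS := real_inner_le_norm p (H p + μ • p)
        nlinarith [norm_nonneg (H p + μ • p)]
  refine ⟨first, ?_⟩
  have hcs := cs_psd_aux A hsymm hposA p (A p)
  have hApA : ⟪A (A p), A p⟫ ≤ (lmax + μbar) * ‖A p‖ ^ 2 := by
    calc ⟪A (A p), A p⟫ ≤ ‖A (A p)‖ * ‖A p‖ := real_inner_le_norm _ _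
      _ ≤ (lmax + μbar) * ‖A p‖ * ‖A p‖ := by
          have := hAle (A p)
          nlinarith [norm_nonneg (A p)]
      _ = (lmax + μbar) * ‖A p‖ ^ 2 := by ring
  have hApp : ⟪A p, A p⟫ = ‖A p‖ ^ 2 := real_inner_self_eq_norm_sq _
  -- from CS: ‖Ap‖^4 ≤ ⟪A p, p⟫ * (lmax+μbar) * ‖Ap‖^2
  have hApv : A p = H p + μ • p := hAapp p
  have hfirst' : ctil / (2 * c₁) * ‖p‖ ≤ ‖A p‖ := by rw [hApv]; exact first
  have hApp' : 0 ≤ ⟪A p, p⟫ := hposA p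
  have hsympA : ⟪A p, p⟫ = ⟪p, H p + μ • p⟫ := by
    rw [real_inner_comm, hApv]
  obtain ⟨s, hs⟩ : ∃ s, ⟪A p, p⟫ = s := ⟨_, rfl⟩
  obtain ⟨t, ht⟩ : ∃ t, ⟪A (A p), A p⟫ = t := ⟨_, rfl⟩
  rw [hApp, hs, ht] at hcs
  rw [ht] at hApA
  rw [hs] at hApp' hsympA
  rw [← hsympA]
  rcases eq_or_lt_of_le (norm_nonneg p) with hp0 | hp0
  · have h0 : (lmax + μbar)⁻¹ * (ctil ^ 2 / (4 * c₁ ^ 2)) * ‖p‖ ^ 2 = 0 := by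
      rw [← hp0]; ring
    rw [h0]; exact hApp'
  · have hAp0 : 0 < ‖A p‖ := lt_of_lt_of_le (by positivity) hfirst'
    have key : ‖A p‖ ^ 2 ≤ (lmax + μbar) * s := by
      have h1 : (‖A p‖ ^ 2) ^ 2 ≤ s * ((lmax + μbar) * ‖A p‖ ^ 2) :=
        le_trans hcs (mul_le_mul_of_nonneg_left hApA hApp')
      have hx2 : 0 < ‖A p‖ ^ 2 := pow_pos hAp0 2
      nlinarith [h1, hx2]
    have h2 : (ctil / (2 * c₁)) ^ 2 * ‖p‖ ^ 2 ≤ ‖A p‖ ^ 2 := by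
      have h := mul_self_le_mul_self (by positivity : (0:ℝ) ≤ ctil / (2 * c₁) * ‖p‖) hfirst'
      nlinarith [h]
    rw [inv_mul_eq_div, div_mul_eq_mul_div, div_le_iff₀ hM]
    have heqq : ctil ^ 2 / (4 * c₁ ^ 2) * ‖p‖ ^ 2 = (ctil / (2 * c₁)) ^ 2 * ‖p‖ ^ 2 := by
      field_simp; ring
    rw [heqq]
    calc (ctil / (2 * c₁)) ^ 2 * ‖p‖ ^ 2 ≤ ‖A p‖ ^ 2 := h2
      _ ≤ (lmax + μbar) * s := key
      _ = s * (lmax + μbar) := by ring
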